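/- Recurrence for the exterior L∞ integral: Let R > 0 and let f₀ : ℝ → ℝ be a probability density function that is symmetric around 0 and non-increasing on [0, ∞). For d ∈ ℕ, d ≥ 1, define h(d) = ∫_{{w ∈ ℝ^d : ‖w‖_∞ > R}} ∏_{i=1}^d ( sup_{x_i: |x_i| ≤ R} f₀(w_i − x_i) ) dw. Then for all d ≥ 2, h(d) = (1 + 2R f₀(0)) h(d−1) + (2R f₀(0))^{d−1}, and h(1) = 1. -/

import Mathlib

open MeasureTheory Set
open scoped BigOperators

section Aux

variable {R : ℝ} {f0 : ℝ → ℝ}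

lemma aux_mono_abs (h_symm : ∀ x, f0 (-x) = f0 x)
    (h_mono : ∀ x y, 0 ≤ x → x ≤ y → f0 y ≤ f0 x) :
    ∀ a b : ℝ, |a| ≤ |b| → f0 b ≤ f0 a := by
  intro a b hab
  have ha : f0 a = f0 |a| := by
    rcases abs_choice a with h | h
    · rw [h]
    · rw [h, h_symm]
  have hb : f0 b = f0 |b| := by
    rcases abs_choice b with h | h
    · rw [h]
    · rw [h, h_symm]
  rw [ha, hb]
  exact h_mono _ _ (abs_nonneg a) hab

lemma aux_sup_eq (hR : 0 < R) (h_nonneg : ∀ x, 0 ≤ f0 x)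
    (h_symm : ∀ x, f0 (-x) = f0 x)
    (h_mono : ∀ x y, 0 ≤ x → x ≤ y → f0 y ≤ f0 x) (w : ℝ) :
    (⨆ x ∈ Set.Icc (-R) R, f0 (w - x)) = f0 (max (|w| - R) 0) := by
  have habs := aux_mono_abs h_symm h_mono
  have bound : ∀ x ∈ Set.Icc (-R) R, f0 (w - x) ≤ f0 (max (|w| - R) 0) := by
    intro x hx
    apply habs
    rw [abs_of_nonneg (le_max_right _ _)]
    apply max_le _ (abs_nonneg _)
    have hxR : |x| ≤ R := abs_le.2 ⟨hx.1, hx.2⟩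
    have := abs_sub_abs_le_abs_sub w x
    linarith
  have attain : ∃ x ∈ Set.Icc (-R) R, f0 (w - x) = f0 (max (|w| - R) 0) := by
    by_cases hw : |w| ≤ R
    · refine ⟨w, ?_, ?_⟩
      · rcases abs_le.1 hw with ⟨h1, h2⟩; exact ⟨h1, h2⟩
      · rw [sub_self, max_eq_right (by linarith)]
    · push_neg at hw
      rw [max_eq_left (by linarith)]
      rcases le_or_gt 0 w with h0 | h0
      · refine ⟨R, ⟨by linarith, le_refl R⟩, ?_⟩
        rw [abs_of_nonneg h0]
      · refine ⟨-R, ⟨le_refl _, by linarith⟩, ?_⟩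
        have : w - -R = -(|w| - R) := by rw [abs_of_neg h0]; ring
        rw [this, h_symm]
  apply le_antisymm
  · exact Real.iSup_le (fun x => Real.iSup_le (fun hx => bound x hx) (h_nonneg _)) (h_nonneg _)
  · obtain ⟨x₀, hx₀, hfx₀⟩ := attain
    have hb : BddAbove (Set.range fun x => ⨆ _ : x ∈ Set.Icc (-R) R, f0 (w - x)) := by
      refine ⟨f0 0, ?_⟩
      rintro y ⟨x, rfl⟩
      exact Real.iSup_le (fun _ => habs 0 (w - x) (by simpa using abs_nonneg (w - x)))
        (h_nonneg 0)
    calc f0 (max (|w| - R) 0) = f0 (w - x₀) := hfx₀.symm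
      _ = ⨆ _ : x₀ ∈ Set.Icc (-R) R, f0 (w - x₀) :=
          (ciSup_pos (f := fun _ : x₀ ∈ Set.Icc (-R) R => f0 (w - x₀)) hx₀).symm
      _ ≤ ⨆ x ∈ Set.Icc (-R) R, f0 (w - x) := le_ciSup hb x₀

end Aux

theorem exterior_Linf_integral_recurrence
    (R : ℝ) (hR : 0 < R)
    (f0 : ℝ → ℝ)
    (h_nonneg : ∀ x, 0 ≤ f0 x) (h_meas : Measurable f0)
    (h_int : ∫ x, f0 x = 1)
    (h_symm : ∀ x, f0 (-x) = f0 x)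
    (h_mono : ∀ x y, 0 ≤ x → x ≤ y → f0 y ≤ f0 x)
    (h : ℕ → ℝ)
    (hh : ∀ d : ℕ, 1 ≤ d →
      h d = ∫ w in {w : Fin d → ℝ | R < ‖w‖},
              ∏ i, ⨆ x ∈ Set.Icc (-R) R, f0 (w i - x)) :
    h 1 = 1 ∧
      ∀ d : ℕ, 2 ≤ d →
        h d = (1 + 2 * R * f0 0) * h (d - 1) + (2 * R * f0 0) ^ (d - 1) := by
  set g : ℝ → ℝ := fun w => f0 (max (|w| - R) 0) with hg
  set A : ℝ := 2 * R * f0 0 with hA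
  -- f0 is integrable
  have hf0_int : Integrable f0 := by
    by_contra hc
    rw [integral_undef hc] at h_int
    norm_num at h_int
  -- g is measurable
  have hg_meas : Measurable g :=
    h_meas.comp ((continuous_abs.sub continuous_const).max continuous_const).measurable
  -- g is integrable
  have hIcc : IntegrableOn g (Icc (-R) R) := by
    have : IntegrableOn (fun _ : ℝ => f0 0) (Icc (-R) R) := by
      apply integrableOn_const ?_
      rw [Real.volume_Icc]
      exact ENNReal.ofReal_ne_top
    apply this.congr_fun _ measurableSet_Icc
    intro w hw
    have : |w| ≤ R := abs_le.2 ⟨hw.1, hw.2⟩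
    simp [hg, max_eq_right (by linarith : |w| - R ≤ 0)]
  have hIoi : IntegrableOn g (Ioi R) := by
    have : IntegrableOn (fun w : ℝ => f0 (w - R)) (Ioi R) :=
      (hf0_int.comp_sub_right R).integrableOn
    apply this.congr_fun _ measurableSet_Ioi
    intro w hw
    simp only [mem_Ioi] at hw
    have hw0 : 0 ≤ w := by linarith
    simp [hg, abs_of_nonneg hw0, max_eq_left (by linarith : (0:ℝ) ≤ w - R)]
  have hIio : IntegrableOn g (Iio (-R)) := by
    have h1 : Integrable (fun w : ℝ => f0 (w - R)) := hf0_int.comp_sub_right R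
    have h2 : Integrable (fun w : ℝ => f0 (-w - R)) := by
      have := h1.comp_neg
      simpa [sub_eq_add_neg] using this
    apply h2.integrableOn.congr_fun _ measurableSet_Iio
    intro w hw
    simp only [mem_Iio] at hw
    have hw0 : w < 0 := by linarith
    simp [hg, abs_of_neg hw0, max_eq_left (by linarith : (0:ℝ) ≤ -w - R)]
  have hunion1 : Iio (-R) ∪ Icc (-R) R = Iic R := by
    ext x
    simp only [mem_union, mem_Iio, mem_Icc, mem_Iic]
    constructor
    · rintro (h | ⟨_, h⟩) <;> linarith
    · intro hx
      rcases lt_or_ge x (-R) with h | h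
      · exact Or.inl h
      · exact Or.inr ⟨h, hx⟩
  have hg_int : Integrable g := by
    rw [← integrableOn_univ]
    have : (univ : Set ℝ) = Iic R ∪ Ioi R := by
      ext x; simp [le_or_gt x R]
    rw [this]
    apply IntegrableOn.union _ hIoi
    rw [← hunion1]
    exact hIio.union hIcc
  -- integral of g over Icc
  have hint_Icc : ∫ w in Icc (-R) R, g w = A := by
    rw [setIntegral_congr_fun measurableSet_Icc (g := fun _ => f0 0), setIntegral_const,
      measureReal_def, Real.volume_Icc, smul_eq_mul]
    · rw [ENNReal.toReal_ofReal (by linarith)]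
      ring
    · intro w hw
      have : |w| ≤ R := abs_le.2 ⟨hw.1, hw.2⟩
      simp [hg, max_eq_right (by linarith : |w| - R ≤ 0)]
  -- pointwise descriptions of g
  have g_Ioi_eq : ∀ w ∈ Ioi R, g w = f0 (w - R) := by
    intro w hw
    simp only [mem_Ioi] at hw
    have hw0 : 0 ≤ w := by linarith
    simp [hg, abs_of_nonneg hw0, max_eq_left (by linarith : (0:ℝ) ≤ w - R)]
  have g_Iio_eq : ∀ w ∈ Iio (-R), g w = f0 (-w - R) := by
    intro w hw
    simp only [mem_Iio] at hw
    have hw0 : w < 0 := by linarith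
    simp [hg, abs_of_neg hw0, max_eq_left (by linarith : (0:ℝ) ≤ -w - R)]
  -- integral over Ioi R
  have key_Ioi' : ∫ w in Ioi R, f0 (w - R) = ∫ w in Ioi 0, f0 w := by
    rw [← integral_indicator measurableSet_Ioi, ← integral_indicator measurableSet_Ioi,
      ← integral_sub_right_eq_self (fun w => (Ioi (0:ℝ)).indicator f0 w) R]
    congr 1
    ext w
    by_cases hw : R < w
    · rw [indicator_of_mem (mem_Ioi.2 hw), indicator_of_mem (mem_Ioi.2 (by linarith))]
    · rw [indicator_of_notMem (fun hc => hw (mem_Ioi.1 hc)),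
        indicator_of_notMem (fun hc => hw (by have := mem_Ioi.1 hc; linarith))]
  have key_Ioi : ∫ w in Ioi R, g w = ∫ w in Ioi 0, f0 w :=
    (setIntegral_congr_fun measurableSet_Ioi g_Ioi_eq).trans key_Ioi'
  -- integral over Iio (-R)
  have key_Iio : ∫ w in Iio (-R), g w = ∫ w in Ioi 0, f0 w := by
    have e1 : ∫ w in Iio (-R), g w = ∫ w in Iio (-R), f0 (-w - R) :=
      setIntegral_congr_fun measurableSet_Iio g_Iio_eq
    have e2 : ∫ w in Iic (-R), f0 (-w - R) = ∫ w in Iio (-R), f0 (-w - R) :=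
      integral_Iic_eq_integral_Iio
    have e3 := integral_comp_neg_Ioi R (fun w => f0 (-w - R))
    simp only [neg_neg] at e3
    rw [e1, ← e2, ← e3, setIntegral_congr_fun measurableSet_Ioi
      (fun w hw => (g_Ioi_eq w hw).symm), key_Ioi]
  -- half integral
  have half : (∫ w in Ioi (0:ℝ), f0 w) + ∫ w in Ioi (0:ℝ), f0 w = 1 := by
    have hneg := integral_comp_neg_Ioi 0 f0
    rw [neg_zero] at hneg
    have hIic : ∫ w in Iic (0:ℝ), f0 w = ∫ w in Ioi (0:ℝ), f0 w := by
      rw [← hneg]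
      exact setIntegral_congr_fun measurableSet_Ioi (fun w _ => h_symm w)
    have := integral_add_compl (s := Iic (0:ℝ)) measurableSet_Iic hf0_int (f := f0)
    rw [compl_Iic, hIic, h_int] at this
    linarith
  -- total integral of g
  have hint_g : ∫ w, g w = 1 + A := by
    have h1 := integral_add_compl (s := Iic R) measurableSet_Iic hg_int (f := g)
    rw [compl_Iic] at h1
    have h2 : ∫ w in Iic R, g w = (∫ w in Ioi 0, f0 w) + A := by
      rw [← hunion1, setIntegral_union (by
        intro s hs1 hs2 x hx
        have := hs1 hx
        have := hs2 hx
        simp only [mem_Iio, mem_Icc] at *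
        exfalso; rcases this with ⟨h1', _⟩; have := ‹∀ ⦃a⦄, a ∈ s → a ∈ Iio (-R)› hx
        simp only [mem_Iio] at this; linarith) measurableSet_Icc hIio hIcc]
      rw [key_Iio, hint_Icc]
    rw [h2, key_Ioi] at h1
    linarith
  -- pi level
  have key : ∀ d : ℕ, 1 ≤ d → h d = (1 + A) ^ d - A ^ d := by
    intro d hd
    have hset : {w : Fin d → ℝ | R < ‖w‖} = (univ.pi fun _ => Icc (-R) R)ᶜ := by
      ext w
      simp only [mem_setOf_eq, mem_compl_iff, mem_pi, mem_univ, forall_true_left, mem_Icc]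
      rw [← not_le, pi_norm_le_iff_of_nonneg hR.le]
      simp [Real.norm_eq_abs, abs_le]
    have hF_int : Integrable (fun w : Fin d → ℝ => ∏ i, g (w i)) :=
      Integrable.fintype_prod (fun _ => hg_int)
    have hS_meas : MeasurableSet (univ.pi fun _ : Fin d => Icc (-R) R) :=
      MeasurableSet.univ_pi (fun _ => measurableSet_Icc)
    have hfull : ∫ w : Fin d → ℝ, ∏ i, g (w i) = (1 + A) ^ d := by
      rw [volume_pi, integral_fintype_prod_eq_pow g, hint_g]
      simp
    have hball : ∫ w in (univ.pi fun _ : Fin d => Icc (-R) R), ∏ i, g (w i) = A ^ d := by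
      rw [← integral_indicator hS_meas]
      have : ∀ w : Fin d → ℝ,
          (univ.pi fun _ : Fin d => Icc (-R) R).indicator (fun w => ∏ i, g (w i)) w
            = ∏ i, (Icc (-R) R).indicator g (w i) := by
        intro w
        by_cases hw : w ∈ univ.pi fun _ : Fin d => Icc (-R) R
        · rw [indicator_of_mem hw]
          apply Finset.prod_congr rfl
          intro i _
          rw [indicator_of_mem (hw i (Set.mem_univ i))]
        · rw [indicator_of_notMem hw]
          simp only [mem_pi, mem_univ, forall_true_left] at hw
          push_neg at hw
          obtain ⟨i, hi⟩ := hw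
          exact (Finset.prod_eq_zero (Finset.mem_univ i) (indicator_of_notMem hi g)).symm
      rw [integral_congr_ae (Filter.Eventually.of_forall this)]
      rw [volume_pi, integral_fintype_prod_eq_pow ((Icc (-R) R).indicator g)]
      rw [integral_indicator measurableSet_Icc, hint_Icc]
      simp
    have := integral_add_compl hS_meas hF_int (f := fun w : Fin d → ℝ => ∏ i, g (w i))
    rw [hh d hd]
    simp_rw [aux_sup_eq hR h_nonneg h_symm h_mono]
    rw [hset]
    rw [hfull, hball] at this
    linarith
  constructor
  · rw [key 1 le_rfl]; ring
  · intro d hd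
    obtain ⟨e, rfl⟩ : ∃ e, d = e + 1 := ⟨d - 1, by omega⟩
    have he : 1 ≤ e := by omega
    rw [key (e + 1) (by omega)]
    have : e + 1 - 1 = e := by omega
    rw [this, key e he]
    ring
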